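/- arXiv:2304.03377 — 3 statements merged into one kernel-verified Lean document; each statement's English description precedes it below -/
import Mathlib

section
/- For any instance I of the online matching problem with reusable resources in which every usage-duration distribution is geometric, i.e. F_i = Geometric(p_i) for each resource i, if p = min_i p_i then Greedy(I) / OPT(I) ≥ (1 + p) / 2. -/
open Finset

/-- An online policy for the online matching problem with reusable resources,
with `N` resources, `T` requests, and neighborhoods `Nbr`.  Upon arrival of
request `t`, the policy observes the time `t`, the set of currently available
resources, and the history of previously observed availability sets, and
matches the request to at most one available resource adjacent to `t`
(`none` means no match). -/
structure Policy (N T : ℕ) (Nbr : Fin T → Finset (Fin N)) where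
  act : Fin T → Finset (Fin N) → List (Finset (Fin N)) → Option (Fin N)
  feasible : ∀ t I hist i, act t I hist = some i → i ∈ I ∩ Nbr t

/-- Sample space of the shared-Bernoulli coupling for geometric usage
durations: `ω i t` is the return flag `P_{it} ~ Bernoulli (p i)`.  A resource
`i` that is unavailable returns at the start of time `t` iff `ω i t = true`;
this makes the usage duration of every match of `i` distributed as
`Geometric (p i)` on `{1, 2, ...}`. -/
abbrev Flags (N T : ℕ) := Fin N → Fin T → Bool

/-- One step of the dynamics at time `t`.  The state is the pair consisting of
the set of resources unavailable at the end of the previous step and the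
history of observed availability sets. -/
def step {N T : ℕ} {Nbr : Fin T → Finset (Fin N)} (π : Policy N T Nbr)
    (ω : Flags N T) (s : Finset (Fin N) × List (Finset (Fin N))) (t : Fin T) :
    Finset (Fin N) × List (Finset (Fin N)) :=
  let busy := s.1.filter fun i => ω i t = false
  let I : Finset (Fin N) := Finset.univ \ busy
  match π.act t I s.2 with
  | none => (busy, I :: s.2)
  | some i => (insert i busy, I :: s.2)

/-- The state just before step `n` (resources unavailable at the end of step
`n-1`, together with the observed history). -/
def stateUpTo {N T : ℕ} {Nbr : Fin T → Finset (Fin N)} (π : Policy N T Nbr)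
    (ω : Flags N T) (n : ℕ) : Finset (Fin N) × List (Finset (Fin N)) :=
  ((List.finRange T).take n).foldl (step π ω) (∅, [])

/-- `I_t`: the set of resources available at time `t` under policy `π`. -/
def avail {N T : ℕ} {Nbr : Fin T → Finset (Fin N)} (π : Policy N T Nbr)
    (ω : Flags N T) (t : Fin T) : Finset (Fin N) :=
  Finset.univ \ ((stateUpTo π ω t.val).1.filter fun i => ω i t = false)

/-- `A_t`: the resource matched at time `t` under policy `π` (`none` = no match). -/
def act {N T : ℕ} {Nbr : Fin T → Finset (Fin N)} (π : Policy N T Nbr)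
    (ω : Flags N T) (t : Fin T) : Option (Fin N) :=
  π.act t (avail π ω t) (stateUpTo π ω t.val).2

/-- The total reward collected by policy `π` on the sample path `ω`. -/
def reward {N T : ℕ} {Nbr : Fin T → Finset (Fin N)} (r : Fin N → ℝ)
    (π : Policy N T Nbr) (ω : Flags N T) : ℝ :=
  ∑ t : Fin T, (act π ω t).elim 0 r

/-- Probability of the flag configuration `ω` when `P_{it} ~ Bernoulli (p i)`
independently. -/
noncomputable def weight {N T : ℕ} (p : Fin N → ℝ) (ω : Flags N T) : ℝ :=
  ∏ i : Fin N, ∏ t : Fin T, if ω i t then p i else 1 - p i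

/-- Expectation over the i.i.d. Bernoulli return flags. -/
noncomputable def expect {N T : ℕ} (p : Fin N → ℝ) (f : Flags N T → ℝ) : ℝ :=
  ∑ ω : Flags N T, weight p ω * f ω

/-- The greedy policy: match the available neighboring resource of largest
index (equivalently, of highest reward, since rewards are sorted). -/
def greedy (N T : ℕ) (Nbr : Fin T → Finset (Fin N)) : Policy N T Nbr where
  act := fun t I _ => if h : (I ∩ Nbr t).Nonempty then some ((I ∩ Nbr t).max' h) else none
  feasible := by
    intro t I hist i hi
    by_cases h : (I ∩ Nbr t).Nonempty
    · rw [dif_pos h, Option.some.injEq] at hi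
      exact hi ▸ Finset.max'_mem _ h
    · rw [dif_neg h] at hi
      exact absurd hi (by simp)

/-- `Greedy(I)`: the expected total reward of the greedy policy. -/
noncomputable def greedyVal (N T : ℕ) (Nbr : Fin T → Finset (Fin N))
    (r : Fin N → ℝ) (p : Fin N → ℝ) : ℝ :=
  expect p (reward r (greedy N T Nbr))

/-- `OPT(I)`: the optimal expected total reward over all (clairvoyant)
policies; such a policy knows the whole instance, including the request
sequence, but observes returns only as they occur. -/
noncomputable def optVal (N T : ℕ) (Nbr : Fin T → Finset (Fin N))
    (r : Fin N → ℝ) (p : Fin N → ℝ) : ℝ :=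
  ⨆ π : Policy N T Nbr, expect p (reward r π)

section AuxA
variable {N T : ℕ} {Nbr : Fin T → Finset (Fin N)}

lemma stateUpTo_zero (ρ : Policy N T Nbr) (ω : Flags N T) :
    stateUpTo ρ ω 0 = (∅, []) := rfl

lemma stateUpTo_succ (ρ : Policy N T Nbr) (ω : Flags N T) {n : ℕ} (h : n < T) :
    stateUpTo ρ ω (n+1) = step ρ ω (stateUpTo ρ ω n) ⟨n, h⟩ := by
  unfold stateUpTo
  rw [List.take_succ]
  have hg : (List.finRange T)[n]? = some ⟨n, h⟩ := by
    rw [List.getElem?_eq_getElem (by simpa using h)]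
    simp
  rw [hg]
  simp

lemma stateUpTo_succ_of_le (ρ : Policy N T Nbr) (ω : Flags N T) {n : ℕ} (h : T ≤ n) :
    stateUpTo ρ ω (n+1) = stateUpTo ρ ω n := by
  unfold stateUpTo
  rw [List.take_of_length_le (by simpa using Nat.le_succ_of_le h),
    List.take_of_length_le (by simpa using h)]

lemma stateUpTo_congr (ρ : Policy N T Nbr) {ω ω' : Flags N T} (n : ℕ)
    (h : ∀ i (s : Fin T), (s : ℕ) < n → ω i s = ω' i s) :
    stateUpTo ρ ω n = stateUpTo ρ ω' n := by
  induction n with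
  | zero => rfl
  | succ n ih =>
    have ih' := ih (fun i s hs => h i s (Nat.lt_succ_of_lt hs))
    by_cases hn : n < T
    · rw [stateUpTo_succ ρ ω hn, stateUpTo_succ ρ ω' hn, ih']
      have hcoord : ∀ i, ω i ⟨n, hn⟩ = ω' i ⟨n, hn⟩ :=
        fun i => h i ⟨n, hn⟩ (Nat.lt_succ_self n)
      unfold step
      simp only [hcoord]
    · rw [stateUpTo_succ_of_le ρ ω (le_of_not_gt hn),
        stateUpTo_succ_of_le ρ ω' (le_of_not_gt hn), ih']

/-- update one coordinate of the flags -/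
def updB {N T : ℕ} (i0 : Fin N) (t0 : Fin T) (b : Bool) (ω : Flags N T) : Flags N T :=
  fun i s => if i = i0 ∧ s = t0 then b else ω i s

lemma updB_self (i0 : Fin N) (t0 : Fin T) (b : Bool) (ω : Flags N T) :
    updB i0 t0 b ω i0 t0 = b := by simp [updB]

lemma updB_ne (i0 : Fin N) (t0 : Fin T) (b : Bool) (ω : Flags N T)
    {i : Fin N} {s : Fin T} (h : ¬(i = i0 ∧ s = t0)) :
    updB i0 t0 b ω i s = ω i s := by simp [updB, h]

lemma updB_updB (i0 : Fin N) (t0 : Fin T) (b b' : Bool) (ω : Flags N T) :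
    updB i0 t0 b (updB i0 t0 b' ω) = updB i0 t0 b ω := by
  funext i s; by_cases h : i = i0 ∧ s = t0 <;> simp [updB, h]

lemma updB_eq_self (i0 : Fin N) (t0 : Fin T) (ω : Flags N T) (h : ω i0 t0 = b) :
    updB i0 t0 b ω = ω := by
  funext i s
  by_cases hc : i = i0 ∧ s = t0
  · obtain ⟨h1, h2⟩ := hc; subst h1; subst h2; simp [updB, h]
  · simp [updB, hc]

lemma stateUpTo_updB (ρ : Policy N T Nbr) (ω : Flags N T) (i0 : Fin N) (t0 : Fin T)
    (b : Bool) {n : ℕ} (hn : n ≤ (t0 : ℕ)) :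
    stateUpTo ρ (updB i0 t0 b ω) n = stateUpTo ρ ω n := by
  refine stateUpTo_congr ρ n (fun i s hs => ?_)
  refine updB_ne i0 t0 b ω (fun hc => ?_)
  exact absurd (hc.2 ▸ (lt_of_lt_of_le hs hn)) (lt_irrefl _)

/-- the weight factor excluding coordinate `(i0, t0)` -/
noncomputable def restW {N T : ℕ} (pv : Fin N → ℝ) (i0 : Fin N) (t0 : Fin T)
    (ω : Flags N T) : ℝ :=
  (∏ s ∈ univ.erase t0, (if ω i0 s then pv i0 else 1 - pv i0)) *
    ∏ i ∈ univ.erase i0, ∏ s : Fin T, (if ω i s then pv i else 1 - pv i)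

lemma weight_eq_restW (pv : Fin N → ℝ) (i0 : Fin N) (t0 : Fin T) (ω : Flags N T) :
    weight pv ω = (if ω i0 t0 then pv i0 else 1 - pv i0) * restW pv i0 t0 ω := by
  unfold weight restW
  rw [← Finset.mul_prod_erase univ _ (mem_univ i0),
    ← Finset.mul_prod_erase univ (fun s => if ω i0 s then pv i0 else 1 - pv i0) (mem_univ t0)]
  ring

lemma restW_updB (pv : Fin N → ℝ) (i0 : Fin N) (t0 : Fin T) (b : Bool) (ω : Flags N T) :
    restW pv i0 t0 (updB i0 t0 b ω) = restW pv i0 t0 ω := by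
  unfold restW
  congr 1
  · refine Finset.prod_congr rfl (fun s hs => ?_)
    rw [updB_ne i0 t0 b ω (fun hc => (mem_erase.mp hs).1 hc.2)]
  · refine Finset.prod_congr rfl (fun i hi => Finset.prod_congr rfl (fun s _ => ?_))
    rw [updB_ne i0 t0 b ω (fun hc => (mem_erase.mp hi).1 hc.1)]

lemma restW_nonneg (pv : Fin N → ℝ) (hpv0 : ∀ i, 0 ≤ pv i) (hpv1 : ∀ i, pv i ≤ 1)
    (i0 : Fin N) (t0 : Fin T) (ω : Flags N T) : 0 ≤ restW pv i0 t0 ω := by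
  unfold restW
  refine mul_nonneg (Finset.prod_nonneg (fun s _ => ?_))
    (Finset.prod_nonneg (fun i _ => Finset.prod_nonneg (fun s _ => ?_)))
  · split
    · exact hpv0 _
    · linarith [hpv1 i0]
  · split
    · exact hpv0 _
    · linarith [hpv1 i]

lemma weight_nonneg (pv : Fin N → ℝ) (hpv0 : ∀ i, 0 ≤ pv i) (hpv1 : ∀ i, pv i ≤ 1)
    (ω : Flags N T) : 0 ≤ weight pv ω := by
  unfold weight
  refine Finset.prod_nonneg (fun i _ => Finset.prod_nonneg (fun s _ => ?_))
  split
  · exact hpv0 _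
  · linarith [hpv1 i]

lemma weight_updB_true (pv : Fin N → ℝ) (i0 : Fin N) (t0 : Fin T) (ω : Flags N T) :
    weight pv (updB i0 t0 true ω) = pv i0 * restW pv i0 t0 ω := by
  rw [weight_eq_restW pv i0 t0, restW_updB, updB_self]
  simp

lemma weight_updB_false (pv : Fin N → ℝ) (i0 : Fin N) (t0 : Fin T) (ω : Flags N T) :
    weight pv (updB i0 t0 false ω) = (1 - pv i0) * restW pv i0 t0 ω := by
  rw [weight_eq_restW pv i0 t0, restW_updB, updB_self]
  simp

/-- split a sum over all flags into pairs along coordinate `(i0, t0)` -/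
lemma sum_split_coord {i0 : Fin N} {t0 : Fin T} (G : Flags N T → ℝ) :
    ∑ ω : Flags N T, G ω
      = ∑ ω ∈ univ.filter (fun ω : Flags N T => ω i0 t0 = false),
          (G ω + G (updB i0 t0 true ω)) := by
  classical
  rw [Finset.sum_add_distrib]
  rw [← Finset.sum_filter_add_sum_filter_not univ (fun ω : Flags N T => ω i0 t0 = false) G]
  congr 1
  have key1 : ∀ a : Flags N T, a i0 t0 = true →
      updB i0 t0 true (updB i0 t0 false a) = a := fun a ha => by
    rw [updB_updB, updB_eq_self _ _ _ ha]
  have key2 : ∀ a : Flags N T, a i0 t0 = false →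
      updB i0 t0 false (updB i0 t0 true a) = a := fun a ha => by
    rw [updB_updB, updB_eq_self _ _ _ ha]
  refine Finset.sum_nbij' (fun ω => updB i0 t0 false ω) (fun ω => updB i0 t0 true ω)
    ?_ ?_ ?_ ?_ ?_
  · intro a ha
    simp only [mem_filter, mem_univ, true_and] at ha ⊢
    simp [updB_self]
  · intro a ha
    simp only [mem_filter, mem_univ, true_and] at ha ⊢
    simp [updB_self]
  · intro a ha
    simp only [mem_filter, mem_univ, true_and] at ha
    exact key1 a (by simpa using ha)
  · intro a ha
    simp only [mem_filter, mem_univ, true_and] at ha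
    exact key2 a ha
  · intro a ha
    simp only [mem_filter, mem_univ, true_and] at ha
    exact congrArg G (key1 a (by simpa using ha)).symm

end AuxA

section AuxB
open Finset
variable {N T : ℕ} {Nbr : Fin T → Finset (Fin N)}

lemma act_mem {ρ : Policy N T Nbr} {ω : Flags N T} {t : Fin T} {i : Fin N}
    (h : act ρ ω t = some i) : i ∈ avail ρ ω t ∩ Nbr t :=
  ρ.feasible t _ _ i h

lemma act_greedy_eq (ω : Flags N T) (t : Fin T) :
    act (greedy N T Nbr) ω t
      = if h : ((avail (greedy N T Nbr) ω t) ∩ Nbr t).Nonempty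
          then some (((avail (greedy N T Nbr) ω t) ∩ Nbr t).max' h) else none := rfl

lemma act_greedy_of_mem {ω : Flags N T} {t : Fin T} {i : Fin N}
    (hav : i ∈ avail (greedy N T Nbr) ω t) (hnbr : i ∈ Nbr t) :
    ∃ j, act (greedy N T Nbr) ω t = some j ∧ i ≤ j := by
  have hne : ((avail (greedy N T Nbr) ω t) ∩ Nbr t).Nonempty :=
    ⟨i, mem_inter.mpr ⟨hav, hnbr⟩⟩
  exact ⟨_, by rw [act_greedy_eq, dif_pos hne],
    Finset.le_max' _ i (mem_inter.mpr ⟨hav, hnbr⟩)⟩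

lemma busy_succ_none {ρ : Policy N T Nbr} {ω : Flags N T} {t : Fin T}
    (h : act ρ ω t = none) :
    (stateUpTo ρ ω ((t : ℕ)+1)).1
      = (stateUpTo ρ ω (t : ℕ)).1.filter (fun i => ω i t = false) := by
  have h' := h
  unfold act avail at h'
  rw [stateUpTo_succ ρ ω t.isLt]
  simp only [step, Fin.eta]
  rw [h']

lemma busy_succ_some {ρ : Policy N T Nbr} {ω : Flags N T} {t : Fin T} {i : Fin N}
    (h : act ρ ω t = some i) :
    (stateUpTo ρ ω ((t : ℕ)+1)).1
      = insert i ((stateUpTo ρ ω (t : ℕ)).1.filter (fun i => ω i t = false)) := by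
  have h' := h
  unfold act avail at h'
  rw [stateUpTo_succ ρ ω t.isLt]
  simp only [step, Fin.eta]
  rw [h']

/-- the difference set `D_n`: busy for greedy, available for `π` -/
def Dt (π : Policy N T Nbr) (ω : Flags N T) (n : ℕ) : Finset (Fin N) :=
  (stateUpTo (greedy N T Nbr) ω n).1 \ (stateUpTo π ω n).1

lemma Dt_updB (π : Policy N T Nbr) (ω : Flags N T) (i0 : Fin N) (t0 : Fin T)
    (b : Bool) {n : ℕ} (hn : n ≤ (t0 : ℕ)) :
    Dt π (updB i0 t0 b ω) n = Dt π ω n := by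
  unfold Dt
  rw [stateUpTo_updB _ _ _ _ _ hn, stateUpTo_updB _ _ _ _ _ hn]

/-- optional singleton of the matched resource -/
def Oins (ρ : Policy N T Nbr) (t : Fin T) (ω : Flags N T) : Finset (Fin N) :=
  (act ρ ω t).elim ∅ (fun i => {i})

variable (r : Fin N → ℝ) (p : ℝ) (π : Policy N T Nbr)

noncomputable def Phi (ω : Flags N T) (n : ℕ) : ℝ := ∑ i ∈ Dt π ω n, r i

noncomputable def costf (t : Fin T) (ω : Flags N T) : ℝ :=
  (act π ω t).elim 0
    (fun i => if i ∈ avail (greedy N T Nbr) ω t then p * r i else (1+p) * r i)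

noncomputable def grd (Nbr : Fin T → Finset (Fin N)) (t : Fin T) (ω : Flags N T) : ℝ :=
  (act (greedy N T Nbr) ω t).elim 0 r

def Dp (t : Fin T) (ω : Flags N T) : Finset (Fin N) :=
  (Dt π ω (t : ℕ)).filter (fun i => ω i t = false)

noncomputable def remT (t : Fin T) (ω : Flags N T) : ℝ :=
  ∑ i ∈ Dp π t ω ∩ Oins π t ω, r i

noncomputable def newT (t : Fin T) (ω : Flags N T) : ℝ :=
  ∑ i ∈ Oins (greedy N T Nbr) t ω \ Oins π t ω, r i

noncomputable def Y1 (t : Fin T) (ω : Flags N T) : ℝ :=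
  costf r p π t ω - grd r Nbr t ω + (1-p) * newT r π t ω - (1-p) * remT r π t ω

lemma grd_nonneg (hr0 : ∀ i, 0 ≤ r i) (t : Fin T) (ω : Flags N T) : 0 ≤ grd r Nbr t ω := by
  unfold grd
  cases act (greedy N T Nbr) ω t with
  | none => exact le_refl 0
  | some j => exact hr0 j

lemma remT_nonneg (hr0 : ∀ i, 0 ≤ r i) (t : Fin T) (ω : Flags N T) : 0 ≤ remT r π t ω :=
  Finset.sum_nonneg (fun i _ => hr0 i)

lemma newT_le_grd (hr0 : ∀ i, 0 ≤ r i) (t : Fin T) (ω : Flags N T) :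
    newT r π t ω ≤ grd r Nbr t ω := by
  unfold newT grd Oins
  cases act (greedy N T Nbr) ω t with
  | none => simp
  | some j =>
      simp only [Option.elim]
      refine le_trans (Finset.sum_le_sum_of_subset_of_nonneg (Finset.sdiff_subset)
        (fun i _ _ => hr0 i)) ?_
      simp

lemma newT_nonneg (hr0 : ∀ i, 0 ≤ r i) (t : Fin T) (ω : Flags N T) : 0 ≤ newT r π t ω :=
  Finset.sum_nonneg (fun i _ => hr0 i)

/-- evolution of the difference set: one step -/
lemma Dt_succ_subset (t : Fin T) (ω : Flags N T) :
    Dt π ω ((t : ℕ)+1)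
      ⊆ (Dp π t ω \ Oins π t ω) ∪ (Oins (greedy N T Nbr) t ω \ Oins π t ω) := by
  intro x hx
  rw [Dt, mem_sdiff] at hx
  obtain ⟨hxg, hxo⟩ := hx
  -- unpack the π-side: x not inserted and not in the filtered busy set
  have hxOins : x ∉ Oins π t ω ∧ x ∉ (stateUpTo π ω (t : ℕ)).1.filter (fun i => ω i t = false) := by
    rcases hπ : act π ω t with _ | i
    · rw [busy_succ_none hπ] at hxo
      constructor
      · simp [Oins, hπ]
      · exact hxo
    · rw [busy_succ_some hπ] at hxo
      rw [Finset.mem_insert] at hxo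
      push_neg at hxo
      constructor
      · simp [Oins, hπ, hxo.1]
      · exact hxo.2
  rcases hg : act (greedy N T Nbr) ω t with _ | j
  · rw [busy_succ_none hg] at hxg
    refine Finset.mem_union_left _ ?_
    rw [mem_sdiff]
    refine ⟨?_, hxOins.1⟩
    rw [Dp, mem_filter, Dt, mem_sdiff]
    rw [mem_filter] at hxg
    have hxno : x ∉ (stateUpTo π ω (t : ℕ)).1 := by
      intro hmem
      exact hxOins.2 (mem_filter.mpr ⟨hmem, hxg.2⟩)
    exact ⟨⟨hxg.1, hxno⟩, hxg.2⟩
  · rw [busy_succ_some hg, Finset.mem_insert] at hxg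
    rcases hxg with hxj | hxg
    · refine Finset.mem_union_right _ ?_
      rw [mem_sdiff]
      refine ⟨?_, hxOins.1⟩
      simp [Oins, hg, hxj]
    · refine Finset.mem_union_left _ ?_
      rw [mem_sdiff]
      refine ⟨?_, hxOins.1⟩
      rw [Dp, mem_filter, Dt, mem_sdiff]
      rw [mem_filter] at hxg
      have hxno : x ∉ (stateUpTo π ω (t : ℕ)).1 := by
        intro hmem
        exact hxOins.2 (mem_filter.mpr ⟨hmem, hxg.2⟩)
      exact ⟨⟨hxg.1, hxno⟩, hxg.2⟩

lemma Phi_succ_le (hr0 : ∀ i, 0 ≤ r i) (t : Fin T) (ω : Flags N T) :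
    Phi r π ω ((t : ℕ)+1)
      ≤ (∑ i ∈ Dp π t ω, r i) - remT r π t ω + newT r π t ω := by
  have h1 : Phi r π ω ((t : ℕ)+1)
      ≤ ∑ i ∈ (Dp π t ω \ Oins π t ω) ∪ (Oins (greedy N T Nbr) t ω \ Oins π t ω), r i :=
    Finset.sum_le_sum_of_subset_of_nonneg (Dt_succ_subset π t ω) (fun i _ _ => hr0 i)
  have h2 : ∑ i ∈ (Dp π t ω \ Oins π t ω) ∪ (Oins (greedy N T Nbr) t ω \ Oins π t ω), r i
      ≤ (∑ i ∈ Dp π t ω \ Oins π t ω, r i)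
        + ∑ i ∈ Oins (greedy N T Nbr) t ω \ Oins π t ω, r i := by
    have hui := Finset.sum_union_inter (s₁ := Dp π t ω \ Oins π t ω)
      (s₂ := Oins (greedy N T Nbr) t ω \ Oins π t ω) (f := r)
    have hnn : 0 ≤ ∑ i ∈ (Dp π t ω \ Oins π t ω) ∩ (Oins (greedy N T Nbr) t ω \ Oins π t ω), r i :=
      Finset.sum_nonneg (fun i _ => hr0 i)
    linarith
  have h3 : ∑ i ∈ Dp π t ω \ Oins π t ω, r i = (∑ i ∈ Dp π t ω, r i) - remT r π t ω := by
    rw [← Finset.sdiff_inter_self_left (Dp π t ω) (Oins π t ω)]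
    rw [Finset.sum_sdiff_eq_sub Finset.inter_subset_left]
    rfl
  rw [h3] at h2
  calc Phi r π ω ((t : ℕ)+1) ≤ _ := h1
    _ ≤ _ := h2
    _ = _ := rfl

end AuxB

section AuxC
open Finset
variable {N T : ℕ} {Nbr : Fin T → Finset (Fin N)}
variable (r : Fin N → ℝ) (p : ℝ) (π : Policy N T Nbr)

lemma avail_iff_busy {ρ : Policy N T Nbr} {ω : Flags N T} {t : Fin T} {i : Fin N} :
    i ∉ avail ρ ω t ↔ (i ∈ (stateUpTo ρ ω (t : ℕ)).1 ∧ ω i t = false) := by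
  unfold avail
  simp [mem_sdiff]

lemma costf_some {t : Fin T} {ω : Flags N T} {i : Fin N} (hπ : act π ω t = some i) :
    costf r p π t ω
      = if i ∈ avail (greedy N T Nbr) ω t then p * r i else (1+p) * r i := by
  unfold costf; rw [hπ]; rfl

lemma remT_A {t : Fin T} {ω : Flags N T} {i : Fin N} (hπ : act π ω t = some i)
    (hav : i ∈ avail (greedy N T Nbr) ω t) : remT r π t ω = 0 := by
  unfold remT
  have hOins : Oins π t ω = {i} := by simp [Oins, hπ]
  have hnot : i ∉ Dp π t ω := by
    rw [Dp, mem_filter]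
    rintro ⟨hmem, hflag⟩
    rw [Dt, mem_sdiff] at hmem
    exact (avail_iff_busy.mpr ⟨hmem.1, hflag⟩) hav
  rw [hOins]
  rw [Finset.inter_singleton_of_notMem hnot]
  simp

lemma remT_B {t : Fin T} {ω : Flags N T} {i : Fin N} (hπ : act π ω t = some i)
    (hbusy : i ∉ avail (greedy N T Nbr) ω t) : remT r π t ω = r i := by
  unfold remT
  have hOins : Oins π t ω = {i} := by simp [Oins, hπ]
  obtain ⟨hbg, hflag⟩ := avail_iff_busy.mp hbusy
  have havπ : i ∈ avail π ω t := mem_inter.mp (act_mem hπ) |>.1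
  have hnbo : i ∉ (stateUpTo π ω (t : ℕ)).1 := by
    intro hmem
    exact (avail_iff_busy.mpr ⟨hmem, hflag⟩) havπ
  have hmemDp : i ∈ Dp π t ω := by
    rw [Dp, mem_filter, Dt, mem_sdiff]
    exact ⟨⟨hbg, hnbo⟩, hflag⟩
  rw [hOins, Finset.inter_singleton_of_mem hmemDp]
  simp

lemma iB_mem_Dt {t : Fin T} {ω : Flags N T} {i : Fin N} (hπ : act π ω t = some i)
    (hbusy : i ∉ avail (greedy N T Nbr) ω t) : i ∈ Dt π ω (t : ℕ) := by
  obtain ⟨hbg, hflag⟩ := avail_iff_busy.mp hbusy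
  have havπ : i ∈ avail π ω t := mem_inter.mp (act_mem hπ) |>.1
  have hnbo : i ∉ (stateUpTo π ω (t : ℕ)).1 := by
    intro hmem
    exact (avail_iff_busy.mpr ⟨hmem, hflag⟩) havπ
  rw [Dt, mem_sdiff]
  exact ⟨hbg, hnbo⟩

lemma Y1_none_le (hr0 : ∀ i, 0 ≤ r i) (hp0 : 0 ≤ p) (hp1 : p ≤ 1)
    {t : Fin T} {ω : Flags N T} (hπ : act π ω t = none) : Y1 r p π t ω ≤ 0 := by
  unfold Y1
  have hc : costf r p π t ω = 0 := by unfold costf; rw [hπ]; rfl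
  have h1 := newT_le_grd r π hr0 t ω
  have h2 := remT_nonneg r π hr0 t ω
  have h3 := grd_nonneg (Nbr := Nbr) r hr0 t ω
  have h4 := newT_nonneg r π hr0 t ω
  rw [hc]
  nlinarith

lemma Y1_A_le (hr0 : ∀ i, 0 ≤ r i) (hp0 : 0 ≤ p) (hp1 : p ≤ 1)
    {t : Fin T} {ω : Flags N T} {i : Fin N} (hπ : act π ω t = some i)
    (hav : i ∈ avail (greedy N T Nbr) ω t) :
    Y1 r p π t ω ≤ p * r i - p * grd r Nbr t ω := by
  unfold Y1
  rw [costf_some r p π hπ, if_pos hav, remT_A r π hπ hav]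
  have h1 := newT_le_grd r π hr0 t ω
  have h4 := newT_nonneg r π hr0 t ω
  nlinarith

lemma grd_ge_of_A (hrmono : Monotone r)
    {t : Fin T} {ω : Flags N T} {i : Fin N} (hπ : act π ω t = some i)
    (hav : i ∈ avail (greedy N T Nbr) ω t) : r i ≤ grd r Nbr t ω := by
  obtain ⟨j, hj, hij⟩ := act_greedy_of_mem hav (mem_inter.mp (act_mem hπ)).2
  unfold grd
  rw [hj]
  exact hrmono hij

lemma Y1_A_diag_le (hr0 : ∀ i, 0 ≤ r i) (hp0 : 0 ≤ p) (hp1 : p ≤ 1)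
    {t : Fin T} {ω : Flags N T} {i : Fin N} (hπ : act π ω t = some i)
    (hg : act (greedy N T Nbr) ω t = some i) :
    Y1 r p π t ω ≤ (p - 1) * r i := by
  unfold Y1
  have hav : i ∈ avail (greedy N T Nbr) ω t := (mem_inter.mp (act_mem hg)).1
  rw [costf_some r p π hπ, if_pos hav, remT_A r π hπ hav]
  have hnew : newT r π t ω = 0 := by
    unfold newT
    have h1 : Oins (greedy N T Nbr) t ω = {i} := by simp [Oins, hg]
    have h2 : Oins π t ω = {i} := by simp [Oins, hπ]
    rw [h1, h2]
    simp
  have hgrd : grd r Nbr t ω = r i := by unfold grd; rw [hg]; rfl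
  rw [hnew, hgrd]
  ring_nf
  nlinarith [hr0 i]

lemma Y1_B_le (hr0 : ∀ i, 0 ≤ r i) (hp0 : 0 ≤ p) (hp1 : p ≤ 1)
    {t : Fin T} {ω : Flags N T} {i : Fin N} (hπ : act π ω t = some i)
    (hbusy : i ∉ avail (greedy N T Nbr) ω t) :
    Y1 r p π t ω ≤ 2*p * r i - p * grd r Nbr t ω := by
  unfold Y1
  rw [costf_some r p π hπ, if_neg hbusy, remT_B r π hπ hbusy]
  have h1 := newT_le_grd r π hr0 t ω
  have h4 := newT_nonneg r π hr0 t ω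
  nlinarith

/-- flipping the flag of a resource that is not busy for `π` does not change
`π`'s action at time `t` -/
lemma act_flip_pi {t : Fin T} {ω : Flags N T} {i : Fin N}
    (hnbo : i ∉ (stateUpTo π ω (t : ℕ)).1) (b : Bool) :
    act π (updB i t b ω) t = act π ω t := by
  have hstate : stateUpTo π (updB i t b ω) (t : ℕ) = stateUpTo π ω (t : ℕ) :=
    stateUpTo_updB π ω i t b (le_refl _)
  have havail : avail π (updB i t b ω) t = avail π ω t := by
    unfold avail
    rw [hstate]
    congr 1
    refine Finset.filter_congr (fun x hx => ?_)
    rw [updB_ne i t b ω (fun hc => hnbo (hc.1 ▸ hx))]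
  unfold act
  rw [havail, hstate]

lemma avail_flip_greedy {t : Fin T} {ω : Flags N T} {i : Fin N}
    (hbusy : i ∉ avail (greedy N T Nbr) ω t) :
    avail (greedy N T Nbr) (updB i t true ω) t
      = insert i (avail (greedy N T Nbr) ω t) := by
  obtain ⟨hbg, hflag⟩ := avail_iff_busy.mp hbusy
  unfold avail
  rw [stateUpTo_updB _ ω i t true (le_refl _)]
  have hfe : (stateUpTo (greedy N T Nbr) ω (t : ℕ)).1.filter
        (fun x => updB i t true ω x t = false)
      = ((stateUpTo (greedy N T Nbr) ω (t : ℕ)).1.filter (fun x => ω x t = false)).erase i := by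
    ext x
    rw [mem_erase, mem_filter, mem_filter]
    by_cases hxi : x = i
    · subst hxi
      simp [updB_self]
    · rw [updB_ne i t true ω (fun hc => hxi hc.1)]
      tauto
  rw [hfe]
  ext x
  rw [mem_insert, mem_sdiff, mem_sdiff, mem_erase]
  by_cases hxi : x = i
  · subst hxi
    simp
  · simp only [mem_univ, true_and]
    tauto

lemma flip_greedy_dichotomy (hrmono : Monotone r)
    {t : Fin T} {ω : Flags N T} {i : Fin N} (hπ : act π ω t = some i)
    (hbusy : i ∉ avail (greedy N T Nbr) ω t) :
    act (greedy N T Nbr) (updB i t true ω) t = some i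
      ∨ (act (greedy N T Nbr) (updB i t true ω) t = act (greedy N T Nbr) ω t
          ∧ ∃ j, act (greedy N T Nbr) ω t = some j ∧ r i ≤ r j) := by
  have hnbr : i ∈ Nbr t := (mem_inter.mp (act_mem hπ)).2
  have hM' : avail (greedy N T Nbr) (updB i t true ω) t ∩ Nbr t
      = insert i (avail (greedy N T Nbr) ω t ∩ Nbr t) := by
    rw [avail_flip_greedy hbusy, Finset.insert_inter_of_mem hnbr]
  set M := avail (greedy N T Nbr) ω t ∩ Nbr t with hMdef
  have hne' : (avail (greedy N T Nbr) (updB i t true ω) t ∩ Nbr t).Nonempty := by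
    rw [hM']
    exact ⟨i, mem_insert_self i M⟩
  have hact' : act (greedy N T Nbr) (updB i t true ω) t
      = some ((avail (greedy N T Nbr) (updB i t true ω) t ∩ Nbr t).max' hne') := by
    rw [act_greedy_eq, dif_pos hne']
  by_cases hmax : (avail (greedy N T Nbr) (updB i t true ω) t ∩ Nbr t).max' hne' = i
  · left
    rw [hact', hmax]
  · right
    have hmem' : (avail (greedy N T Nbr) (updB i t true ω) t ∩ Nbr t).max' hne'
        ∈ insert i M := by
      rw [← hM']
      exact Finset.max'_mem _ hne'
    have hmemM : (avail (greedy N T Nbr) (updB i t true ω) t ∩ Nbr t).max' hne' ∈ M := by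
      rcases mem_insert.mp hmem' with h | h
      · exact absurd h hmax
      · exact h
    have hneM : M.Nonempty := ⟨_, hmemM⟩
    have hactω : act (greedy N T Nbr) ω t = some (M.max' hneM) := by
      rw [act_greedy_eq, dif_pos hneM]
    have heq : M.max' hneM = (avail (greedy N T Nbr) (updB i t true ω) t ∩ Nbr t).max' hne' := by
      apply le_antisymm
      · refine Finset.le_max' _ _ ?_
        rw [hM']
        exact mem_insert_of_mem (Finset.max'_mem _ hneM)
      · exact Finset.le_max' _ _ hmemM
    constructor
    · rw [hact', hactω, heq]
    · refine ⟨M.max' hneM, hactω, hrmono ?_⟩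
      rw [heq]
      refine Finset.le_max' _ _ ?_
      rw [hM']
      exact mem_insert_self i M

/-- integrate out a single coordinate -/
lemma coord_int (pv : Fin N → ℝ) (i0 : Fin N) (t0 : Fin T) (f : Flags N T → ℝ)
    (hf : ∀ ω b, f (updB i0 t0 b ω) = f ω) :
    ∑ ω : Flags N T, (if ω i0 t0 = true then weight pv ω * f ω else 0)
      = pv i0 * ∑ ω : Flags N T, weight pv ω * f ω := by
  classical
  rw [sum_split_coord (i0 := i0) (t0 := t0)
      (G := fun ω => if ω i0 t0 = true then weight pv ω * f ω else 0),
    sum_split_coord (i0 := i0) (t0 := t0) (G := fun ω => weight pv ω * f ω),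
    Finset.mul_sum]
  refine Finset.sum_congr rfl (fun ω hω => ?_)
  have hωf : ω i0 t0 = false := by simpa using (mem_filter.mp hω).2
  rw [if_neg (by simp [hωf]), if_pos (by simp [updB_self]), hf ω true]
  rw [weight_updB_true, weight_eq_restW pv i0 t0 ω, hωf]
  simp only [Bool.false_eq_true, if_false]
  ring

end AuxC

section AuxD
open Finset
variable {N T : ℕ} {Nbr : Fin T → Finset (Fin N)}
variable (r : Fin N → ℝ) (p : ℝ) (π : Policy N T Nbr) (pv : Fin N → ℝ)

lemma pair_numeric {p q R rs G Y Yf : ℝ} (hp0 : 0 ≤ p) (hq : p ≤ q) (hq1 : q ≤ 1)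
    (hR : 0 ≤ R) (hrs : 0 ≤ rs) (hG : 0 ≤ G)
    (hY : Y ≤ 2*p*rs - p*G)
    (hcase : Yf ≤ (p-1)*rs ∨ (Yf ≤ p*rs - p*G ∧ rs ≤ G)) :
    (1-q)*R*Y + (q*R)*Yf ≤ (1-p)*q*rs*R := by
  have hw1 : 0 ≤ (1-q)*R := mul_nonneg (by linarith) hR
  have hw2 : 0 ≤ q*R := mul_nonneg (by linarith) hR
  have l1 : (1-q)*R*Y ≤ (1-q)*R*(2*p*rs - p*G) := mul_le_mul_of_nonneg_left hY hw1
  rcases hcase with h | ⟨h, hrsG⟩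
  · have l2 : q*R*Yf ≤ q*R*((p-1)*rs) := mul_le_mul_of_nonneg_left h hw2
    nlinarith [mul_nonneg (mul_nonneg hR hrs) (sub_nonneg.mpr hq),
      mul_nonneg (mul_nonneg (mul_nonneg hR hG) hp0) (sub_nonneg.mpr hq1)]
  · have l2 : q*R*Yf ≤ q*R*(p*rs - p*G) := mul_le_mul_of_nonneg_left h hw2
    nlinarith [mul_nonneg (mul_nonneg hR hrs) (sub_nonneg.mpr hq),
      mul_nonneg (mul_nonneg hR hp0) (sub_nonneg.mpr hrsG)]

lemma Y1_notB_le (hr0 : ∀ i, 0 ≤ r i) (hrmono : Monotone r) (hp0 : 0 ≤ p) (hp1 : p ≤ 1)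
    {t : Fin T} {ω : Flags N T}
    (h : ¬∃ i, act π ω t = some i ∧ i ∉ avail (greedy N T Nbr) ω t) :
    Y1 r p π t ω ≤ 0 := by
  rcases hπ : act π ω t with _ | i
  · exact Y1_none_le r p π hr0 hp0 hp1 hπ
  · push_neg at h
    have hav := h i hπ
    have h1 := Y1_A_le r p π hr0 hp0 hp1 hπ hav
    have h2 := grd_ge_of_A r π hrmono hπ hav
    nlinarith

/-- The key pairing estimate:  `E[Y1] ≤ (1-p) E[∑_{i ∈ D_t} pv i r i]`. -/
lemma E_Y1_le (hN : 0 < N) (hr0 : ∀ i, 0 ≤ r i) (hrmono : Monotone r)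
    (hp0 : 0 ≤ p) (hp1 : p ≤ 1)
    (hpv0 : ∀ i, 0 ≤ pv i) (hpv1 : ∀ i, pv i ≤ 1) (hple : ∀ i, p ≤ pv i)
    (t : Fin T) :
    ∑ ω : Flags N T, weight pv ω * Y1 r p π t ω
      ≤ ∑ ω : Flags N T, weight pv ω * ((1-p) * ∑ i ∈ Dt π ω (t : ℕ), pv i * r i) := by
  classical
  set Q : Finset (Flags N T) :=
    univ.filter (fun ω => ∃ i, act π ω t = some i ∧ i ∉ avail (greedy N T Nbr) ω t)
    with hQdef
  set istar : Flags N T → Fin N := fun ω => (act π ω t).getD ⟨0, hN⟩ with histar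
  set flip : Flags N T → Flags N T := fun ω => updB (istar ω) t true ω with hflip
  -- basic facts about B-events
  have hQ : ∀ ω ∈ Q, act π ω t = some (istar ω)
      ∧ istar ω ∉ avail (greedy N T Nbr) ω t := by
    intro ω hω
    obtain ⟨i, hi, hbusy⟩ := (mem_filter.mp hω).2
    have : istar ω = i := by rw [histar]; simp [hi]
    rw [this]
    exact ⟨hi, hbusy⟩
  have hcoord : ∀ ω ∈ Q, ω (istar ω) t = false := by
    intro ω hω
    exact (avail_iff_busy.mp (hQ ω hω).2).2
  have hnbo : ∀ ω ∈ Q, istar ω ∉ (stateUpTo π ω (t : ℕ)).1 := by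
    intro ω hω
    have havπ : istar ω ∈ avail π ω t := (mem_inter.mp (act_mem (hQ ω hω).1)).1
    intro hmem
    exact (avail_iff_busy.mpr ⟨hmem, hcoord ω hω⟩) havπ
  have hactflip : ∀ ω ∈ Q, act π (flip ω) t = some (istar ω) := by
    intro ω hω
    rw [hflip]
    rw [act_flip_pi π (hnbo ω hω) true]
    exact (hQ ω hω).1
  have histarflip : ∀ ω ∈ Q, istar (flip ω) = istar ω := by
    intro ω hω
    rw [histar]
    simp only
    rw [hactflip ω hω]
    rfl
  have hflipinv : ∀ ω ∈ Q, updB (istar ω) t false (flip ω) = ω := by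
    intro ω hω
    rw [hflip]
    simp only
    rw [updB_updB, updB_eq_self _ _ _ (hcoord ω hω)]
  have havflip : ∀ ω ∈ Q, istar ω ∈ avail (greedy N T Nbr) (flip ω) t := by
    intro ω hω
    rw [hflip]
    simp only
    rw [avail_flip_greedy (hQ ω hω).2]
    exact mem_insert_self _ _
  have hflipnotQ : ∀ ω ∈ Q, flip ω ∉ Q := by
    intro ω hω hmem
    rw [hQdef, mem_filter] at hmem
    obtain ⟨i, hi, hbusy⟩ := hmem.2
    rw [hactflip ω hω] at hi
    have hii := Option.some.inj hi
    exact hbusy (hii ▸ havflip ω hω)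
  have hinj : ∀ a ∈ Q, ∀ b ∈ Q, flip a = flip b → a = b := by
    intro a ha b hb hab
    have h1 : istar a = istar b := by
      have := hactflip a ha
      rw [hab, hactflip b hb] at this
      exact (Option.some.injEq _ _).mp this.symm
    calc a = updB (istar a) t false (flip a) := (hflipinv a ha).symm
      _ = updB (istar b) t false (flip b) := by rw [h1, hab]
      _ = b := hflipinv b hb
  -- the majorant functions
  set mfun : Flags N T → ℝ :=
    fun ω => (act π ω t).elim 0 (fun i => (1-p) * (pv i * r i) * weight pv ω) with hmfun
  set hfun : Flags N T → ℝ :=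
    fun ω => weight pv ω * ((1-p) * ∑ i ∈ Dt π ω (t : ℕ), pv i * r i) with hhfun
  have hfun_nonneg : ∀ ω, 0 ≤ hfun ω := by
    intro ω
    refine mul_nonneg (weight_nonneg pv hpv0 hpv1 ω)
      (mul_nonneg (by linarith) (Finset.sum_nonneg (fun i _ => mul_nonneg (hpv0 i) (hr0 i))))
  have hm_le_h : ∀ ω, (∃ j, act π ω t = some j ∧ j ∈ Dt π ω (t : ℕ)) → mfun ω ≤ hfun ω := by
    intro ω ⟨j, hj, hjD⟩
    rw [hmfun, hhfun]
    simp only [hj, Option.elim]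
    have h1 : pv j * r j ≤ ∑ i ∈ Dt π ω (t : ℕ), pv i * r i :=
      Finset.single_le_sum (fun i _ => mul_nonneg (hpv0 i) (hr0 i)) hjD
    have h2 := weight_nonneg pv hpv0 hpv1 ω
    nlinarith [mul_nonneg (mul_nonneg h2 (show (0:ℝ) ≤ 1-p by linarith))
      (sub_nonneg.mpr h1)]
  -- pair bound
  have hpair : ∀ ω ∈ Q,
      weight pv ω * Y1 r p π t ω + weight pv (flip ω) * Y1 r p π t (flip ω)
        ≤ mfun ω + mfun (flip ω) := by
    intro ω hω
    set i := istar ω with hidef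
    set q := pv i with hqdef
    set R := restW pv i t ω with hRdef
    have hwω : weight pv ω = (1-q) * R := by
      rw [weight_eq_restW pv i t ω, hcoord ω hω]
      simp
      rfl
    have hwf : weight pv (flip ω) = q * R := by
      rw [hflip]
      simp only
      rw [← hidef, weight_updB_true]
    have hR0 : 0 ≤ R := hRdef ▸ restW_nonneg pv hpv0 hpv1 i t ω
    have hYB : Y1 r p π t ω ≤ 2*p * r i - p * grd r Nbr t ω :=
      Y1_B_le r p π hr0 hp0 hp1 (hQ ω hω).1 (hQ ω hω).2
    have hdich := flip_greedy_dichotomy r π hrmono (hQ ω hω).1 (hQ ω hω).2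
    have hcase : Y1 r p π t (flip ω) ≤ (p-1) * r i
        ∨ (Y1 r p π t (flip ω) ≤ p * r i - p * grd r Nbr t ω ∧ r i ≤ grd r Nbr t ω) := by
      rcases hdich with hdiag | ⟨heq, j, hj, hij⟩
      · left
        exact Y1_A_diag_le r p π hr0 hp0 hp1 (hactflip ω hω) hdiag
      · right
        have hgeq : grd r Nbr t (flip ω) = grd r Nbr t ω := by
          unfold grd; rw [heq]
        have hY1f := Y1_A_le r p π hr0 hp0 hp1 (hactflip ω hω) (havflip ω hω)
        rw [hgeq] at hY1f
        refine ⟨hY1f, ?_⟩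
        unfold grd; rw [hj]; exact hij
    have hmω : mfun ω = (1-p) * (q * r i) * ((1-q) * R) := by
      rw [hmfun]
      simp only [(hQ ω hω).1, Option.elim]
      rw [hwω, hqdef]
      try ring
    have hmf : mfun (flip ω) = (1-p) * (q * r i) * (q * R) := by
      rw [hmfun]
      simp only [hactflip ω hω, Option.elim]
      rw [hwf, hqdef]
      try ring
    rw [hwω, hwf, hmω, hmf]
    have := pair_numeric (p := p) (q := q) (R := R) (rs := r i)
      (G := grd r Nbr t ω) (Y := Y1 r p π t ω) (Yf := Y1 r p π t (flip ω))
      hp0 (hqdef ▸ hple i) (hqdef ▸ hpv1 i) hR0 (hr0 i)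
      (grd_nonneg (Nbr := Nbr) r hr0 t ω) hYB hcase
    nlinarith [this]
  -- assemble the sums
  set U : Finset (Flags N T) := Q ∪ Q.image flip with hU
  have hdisj : Disjoint Q (Q.image flip) := by
    rw [Finset.disjoint_right]
    intro x hx
    obtain ⟨a, ha, rfl⟩ := Finset.mem_image.mp hx
    exact hflipnotQ a ha
  have hsplit : ∑ ω : Flags N T, weight pv ω * Y1 r p π t ω
      = (∑ ω ∈ univ \ U, weight pv ω * Y1 r p π t ω)
        + ∑ ω ∈ U, weight pv ω * Y1 r p π t ω :=
    (Finset.sum_sdiff (Finset.subset_univ U)).symm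
  have hrest : (∑ ω ∈ univ \ U, weight pv ω * Y1 r p π t ω) ≤ 0 := by
    refine Finset.sum_nonpos (fun ω hω => ?_)
    have hωnQ : ω ∉ Q := by
      intro hmem
      exact (Finset.mem_sdiff.mp hω).2 (Finset.mem_union_left _ hmem)
    have hnotB : ¬∃ i, act π ω t = some i ∧ i ∉ avail (greedy N T Nbr) ω t := by
      intro hex
      exact hωnQ (mem_filter.mpr ⟨mem_univ ω, hex⟩)
    exact mul_nonpos_of_nonneg_of_nonpos (weight_nonneg pv hpv0 hpv1 ω)
      (Y1_notB_le r p π hr0 hrmono hp0 hp1 hnotB)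
  have hUsum : ∑ ω ∈ U, weight pv ω * Y1 r p π t ω ≤ ∑ ω ∈ U, mfun ω := by
    rw [hU, Finset.sum_union hdisj, Finset.sum_union hdisj,
      Finset.sum_image hinj, Finset.sum_image hinj]
    rw [← Finset.sum_add_distrib, ← Finset.sum_add_distrib]
    exact Finset.sum_le_sum hpair
  have hUh : ∑ ω ∈ U, mfun ω ≤ ∑ ω ∈ U, hfun ω := by
    refine Finset.sum_le_sum (fun ω hω => ?_)
    rcases Finset.mem_union.mp hω with hq | himg
    · exact hm_le_h ω ⟨istar ω, (hQ ω hq).1, iB_mem_Dt π (hQ ω hq).1 (hQ ω hq).2⟩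
    · obtain ⟨a, ha, rfl⟩ := Finset.mem_image.mp himg
      refine hm_le_h (flip a) ⟨istar a, hactflip a ha, ?_⟩
      rw [hflip]
      simp only
      rw [Dt_updB π a (istar a) t true (le_refl _)]
      exact iB_mem_Dt π (hQ a ha).1 (hQ a ha).2
  have hfin : ∑ ω ∈ U, hfun ω ≤ ∑ ω : Flags N T, hfun ω :=
    Finset.sum_le_sum_of_subset_of_nonneg (Finset.subset_univ U)
      (fun ω _ _ => hfun_nonneg ω)
  calc ∑ ω : Flags N T, weight pv ω * Y1 r p π t ω
      = _ := hsplit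
    _ ≤ ∑ ω ∈ U, weight pv ω * Y1 r p π t ω := by linarith [hrest]
    _ ≤ ∑ ω ∈ U, mfun ω := hUsum
    _ ≤ ∑ ω ∈ U, hfun ω := hUh
    _ ≤ ∑ ω : Flags N T, hfun ω := hfin

end AuxD

section AuxE
open Finset
variable {N T : ℕ} {Nbr : Fin T → Finset (Fin N)}
variable (r : Fin N → ℝ) (p : ℝ) (π : Policy N T Nbr) (pv : Fin N → ℝ)

lemma E_drift (t : Fin T) :
    ∑ ω : Flags N T, weight pv ω * ((∑ i ∈ Dt π ω (t : ℕ), r i) - ∑ i ∈ Dp π t ω, r i)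
      = ∑ ω : Flags N T, weight pv ω * (∑ i ∈ Dt π ω (t : ℕ), pv i * r i) := by
  classical
  have hpt : ∀ ω : Flags N T,
      weight pv ω * ((∑ i ∈ Dt π ω (t : ℕ), r i) - ∑ i ∈ Dp π t ω, r i)
        = ∑ i : Fin N,
            (if ω i t = true then
              weight pv ω * (if i ∈ Dt π ω (t : ℕ) then r i else 0) else 0) := by
    intro ω
    have h1 : ∑ i ∈ Dp π t ω, r i
        = ∑ i ∈ Dt π ω (t : ℕ), (if ω i t = false then r i else 0) := by
      rw [Dp, Finset.sum_filter]
    have h2 : (∑ i ∈ Dt π ω (t : ℕ), r i)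
          - ∑ i ∈ Dt π ω (t : ℕ), (if ω i t = false then r i else 0)
        = ∑ i ∈ Dt π ω (t : ℕ), (if ω i t = true then r i else 0) := by
      rw [← Finset.sum_sub_distrib]
      refine Finset.sum_congr rfl (fun i _ => ?_)
      cases h : ω i t <;> simp [h]
    rw [h1, h2, Finset.mul_sum]
    rw [← Finset.univ_inter (Dt π ω (t : ℕ)), ← Finset.sum_ite_mem]
    refine Finset.sum_congr rfl (fun i _ => ?_)
    by_cases hc1 : ω i t = true <;> by_cases hc2 : i ∈ Dt π ω (t : ℕ) <;>
      simp [hc1, hc2]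
  calc ∑ ω : Flags N T, weight pv ω * ((∑ i ∈ Dt π ω (t : ℕ), r i) - ∑ i ∈ Dp π t ω, r i)
      = ∑ ω : Flags N T, ∑ i : Fin N,
          (if ω i t = true then
            weight pv ω * (if i ∈ Dt π ω (t : ℕ) then r i else 0) else 0) :=
        Finset.sum_congr rfl (fun ω _ => hpt ω)
    _ = ∑ i : Fin N, ∑ ω : Flags N T,
          (if ω i t = true then
            weight pv ω * (if i ∈ Dt π ω (t : ℕ) then r i else 0) else 0) :=
        Finset.sum_comm
    _ = ∑ i : Fin N, pv i * ∑ ω : Flags N T,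
          weight pv ω * (if i ∈ Dt π ω (t : ℕ) then r i else 0) := by
        refine Finset.sum_congr rfl (fun i _ => ?_)
        exact coord_int pv i t _
          (fun ω b => by rw [Dt_updB π ω i t b (le_refl _)])
    _ = ∑ i : Fin N, ∑ ω : Flags N T,
          weight pv ω * (if i ∈ Dt π ω (t : ℕ) then pv i * r i else 0) := by
        refine Finset.sum_congr rfl (fun i _ => ?_)
        rw [Finset.mul_sum]
        refine Finset.sum_congr rfl (fun ω _ => ?_)
        by_cases h : i ∈ Dt π ω (t : ℕ) <;> simp [h] <;> ring
    _ = ∑ ω : Flags N T, ∑ i : Fin N,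
          weight pv ω * (if i ∈ Dt π ω (t : ℕ) then pv i * r i else 0) :=
        Finset.sum_comm
    _ = ∑ ω : Flags N T, weight pv ω * (∑ i ∈ Dt π ω (t : ℕ), pv i * r i) := by
        refine Finset.sum_congr rfl (fun ω _ => ?_)
        rw [Finset.mul_sum, ← Finset.univ_inter (Dt π ω (t : ℕ)), ← Finset.sum_ite_mem]
        refine Finset.sum_congr rfl (fun i _ => ?_)
        by_cases h : i ∈ Dt π ω (t : ℕ) <;> simp [h]

/-- per-step expectation inequality -/
lemma step_exp (hN : 0 < N) (hr0 : ∀ i, 0 ≤ r i) (hrmono : Monotone r)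
    (hp0 : 0 ≤ p) (hp1 : p ≤ 1)
    (hpv0 : ∀ i, 0 ≤ pv i) (hpv1 : ∀ i, pv i ≤ 1) (hple : ∀ i, p ≤ pv i)
    (t : Fin T) :
    ∑ ω : Flags N T, weight pv ω * costf r p π t ω
      ≤ (∑ ω : Flags N T, weight pv ω * grd r Nbr t ω)
        + ((1-p) * (∑ ω : Flags N T, weight pv ω * Phi r π ω (t : ℕ))
            - (1-p) * ∑ ω : Flags N T, weight pv ω * Phi r π ω ((t : ℕ)+1)) := by
  classical
  have hpoint : ∀ ω : Flags N T,
      weight pv ω * (costf r p π t ω + (1-p) * Phi r π ω ((t : ℕ)+1))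
        ≤ weight pv ω * ((Y1 r p π t ω + grd r Nbr t ω)
            + (1-p) * (Phi r π ω (t : ℕ) - ((∑ i ∈ Dt π ω (t : ℕ), r i) - ∑ i ∈ Dp π t ω, r i))) := by
    intro ω
    refine mul_le_mul_of_nonneg_left ?_ (weight_nonneg pv hpv0 hpv1 ω)
    have h1 := Phi_succ_le r π hr0 t ω
    have h2 : Phi r π ω (t : ℕ) = ∑ i ∈ Dt π ω (t : ℕ), r i := rfl
    unfold Y1
    nlinarith [h1]
  have hsum := Finset.sum_le_sum (fun ω (_ : ω ∈ (univ : Finset (Flags N T))) => hpoint ω)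
  have hY := E_Y1_le r p π pv hN hr0 hrmono hp0 hp1 hpv0 hpv1 hple t
  have hD := E_drift r π pv t
  -- expand all the sums
  have e1 : ∑ ω : Flags N T, weight pv ω * (costf r p π t ω + (1-p) * Phi r π ω ((t : ℕ)+1))
      = (∑ ω : Flags N T, weight pv ω * costf r p π t ω)
        + (1-p) * ∑ ω : Flags N T, weight pv ω * Phi r π ω ((t : ℕ)+1) := by
    rw [Finset.mul_sum, ← Finset.sum_add_distrib]
    refine Finset.sum_congr rfl (fun ω _ => by ring)
  have e2 : ∑ ω : Flags N T, weight pv ω * ((Y1 r p π t ω + grd r Nbr t ω)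
        + (1-p) * (Phi r π ω (t : ℕ) - ((∑ i ∈ Dt π ω (t : ℕ), r i) - ∑ i ∈ Dp π t ω, r i)))
      = (∑ ω : Flags N T, weight pv ω * Y1 r p π t ω)
        + (∑ ω : Flags N T, weight pv ω * grd r Nbr t ω)
        + (1-p) * (∑ ω : Flags N T, weight pv ω * Phi r π ω (t : ℕ))
        - (1-p) * ∑ ω : Flags N T, weight pv ω
            * ((∑ i ∈ Dt π ω (t : ℕ), r i) - ∑ i ∈ Dp π t ω, r i) := by
    rw [Finset.mul_sum, Finset.mul_sum, ← Finset.sum_add_distrib, ← Finset.sum_add_distrib,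
      ← Finset.sum_sub_distrib]
    refine Finset.sum_congr rfl (fun ω _ => by ring)
  have e3 : ∑ ω : Flags N T, weight pv ω * ((1-p) * ∑ i ∈ Dt π ω (t : ℕ), pv i * r i)
      = (1-p) * ∑ ω : Flags N T, weight pv ω * (∑ i ∈ Dt π ω (t : ℕ), pv i * r i) := by
    rw [Finset.mul_sum]
    refine Finset.sum_congr rfl (fun ω _ => by ring)
  rw [e1, e2] at hsum
  rw [e3] at hY
  rw [hD] at hsum
  linarith

/-- pathwise: `(1+p) * reward_π(t) ≤ reward_g(t) + cost(t)` -/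
lemma pathwise_step (hr0 : ∀ i, 0 ≤ r i) (hrmono : Monotone r)
    (hp0 : 0 ≤ p) (t : Fin T) (ω : Flags N T) :
    (1+p) * (act π ω t).elim 0 r
      ≤ (act (greedy N T Nbr) ω t).elim 0 r + costf r p π t ω := by
  have hg0 : 0 ≤ (act (greedy N T Nbr) ω t).elim 0 r := by
    cases act (greedy N T Nbr) ω t with
    | none => exact le_refl 0
    | some j => exact hr0 j
  rcases hπ : act π ω t with _ | i
  · have hc : costf r p π t ω = 0 := by unfold costf; rw [hπ]; rfl
    rw [hc]
    have he : (Option.none).elim (0:ℝ) r = 0 := rfl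
    rw [he]
    simpa using hg0
  · rw [costf_some r p π hπ]
    have he : (Option.some i).elim (0:ℝ) r = r i := rfl
    rw [he]
    by_cases hav : i ∈ avail (greedy N T Nbr) ω t
    · rw [if_pos hav]
      have h2 := grd_ge_of_A r π hrmono hπ hav
      unfold grd at h2
      linarith
    · rw [if_neg hav]
      linarith

lemma Phi_zero (ω : Flags N T) : Phi r π ω 0 = 0 := by
  unfold Phi Dt
  rw [stateUpTo_zero, stateUpTo_zero]
  simp

lemma Phi_nonneg (hr0 : ∀ i, 0 ≤ r i) (ω : Flags N T) (n : ℕ) : 0 ≤ Phi r π ω n :=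
  Finset.sum_nonneg (fun i _ => hr0 i)

/-- the main per-policy bound -/
lemma main_bound (hN : 0 < N) (hr0 : ∀ i, 0 ≤ r i) (hrmono : Monotone r)
    (hp0 : 0 ≤ p) (hp1 : p ≤ 1)
    (hpv0 : ∀ i, 0 ≤ pv i) (hpv1 : ∀ i, pv i ≤ 1) (hple : ∀ i, p ≤ pv i) :
    (1+p) * _root_.expect pv (reward r π) ≤ 2 * _root_.expect pv (reward r (greedy N T Nbr)) := by
  classical
  have hswap : ∀ (ρ : Policy N T Nbr), _root_.expect pv (reward r ρ)
      = ∑ t : Fin T, ∑ ω : Flags N T, weight pv ω * (act ρ ω t).elim 0 r := by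
    intro ρ
    unfold _root_.expect reward
    rw [Finset.sum_congr rfl
      (fun (ω : Flags N T) (_ : ω ∈ univ) => Finset.mul_sum
        (univ : Finset (Fin T)) (fun t => (act ρ ω t).elim 0 r) (weight pv ω))]
    exact Finset.sum_comm
  rw [hswap π, hswap (greedy N T Nbr)]
  set u : ℕ → ℝ := fun n => ∑ ω : Flags N T, weight pv ω * Phi r π ω n with hu
  have hper : ∀ t : Fin T,
      (1+p) * ∑ ω : Flags N T, weight pv ω * (act π ω t).elim 0 r
        ≤ 2 * (∑ ω : Flags N T, weight pv ω * (act (greedy N T Nbr) ω t).elim 0 r)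
          + ((1-p) * u (t : ℕ) - (1-p) * u ((t : ℕ)+1)) := by
    intro t
    have h1 : ∀ ω : Flags N T, weight pv ω * ((1+p) * (act π ω t).elim 0 r)
        ≤ weight pv ω * ((act (greedy N T Nbr) ω t).elim 0 r + costf r p π t ω) :=
      fun ω => mul_le_mul_of_nonneg_left
        (pathwise_step r p π hr0 hrmono hp0 t ω) (weight_nonneg pv hpv0 hpv1 ω)
    have h1s := Finset.sum_le_sum (fun ω (_ : ω ∈ (univ : Finset (Flags N T))) => h1 ω)
    have e1 : ∑ ω : Flags N T, weight pv ω * ((1+p) * (act π ω t).elim 0 r)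
        = (1+p) * ∑ ω : Flags N T, weight pv ω * (act π ω t).elim 0 r := by
      rw [Finset.mul_sum]
      exact Finset.sum_congr rfl (fun ω _ => by ring)
    have e2 : ∑ ω : Flags N T, weight pv ω
          * ((act (greedy N T Nbr) ω t).elim 0 r + costf r p π t ω)
        = (∑ ω : Flags N T, weight pv ω * (act (greedy N T Nbr) ω t).elim 0 r)
          + ∑ ω : Flags N T, weight pv ω * costf r p π t ω := by
      rw [← Finset.sum_add_distrib]
      exact Finset.sum_congr rfl (fun ω _ => by ring)
    rw [e1, e2] at h1s
    have h2 := step_exp r p π pv hN hr0 hrmono hp0 hp1 hpv0 hpv1 hple t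
    have hgrdeq : ∀ ω : Flags N T, grd r Nbr t ω = (act (greedy N T Nbr) ω t).elim 0 r :=
      fun ω => rfl
    simp only [hgrdeq] at h2
    rw [hu]
    simp only
    linarith
  have hsum := Finset.sum_le_sum (fun t (_ : t ∈ (univ : Finset (Fin T))) => hper t)
  rw [← Finset.mul_sum, Finset.sum_add_distrib, ← Finset.mul_sum] at hsum
  have htel : ∑ t : Fin T, ((1-p) * u (t : ℕ) - (1-p) * u ((t : ℕ)+1))
      = (1-p) * u 0 - (1-p) * u T := by
    rw [Fin.sum_univ_eq_sum_range (fun n => (1-p) * u n - (1-p) * u (n+1)) T]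
    exact Finset.sum_range_sub' (fun n => (1-p) * u n) T
  have hu0 : u 0 = 0 := by
    rw [hu]
    simp only
    rw [Finset.sum_congr rfl (fun (ω : Flags N T) _ => by rw [Phi_zero r π ω])]
    simp
  have huT : 0 ≤ u T := by
    rw [hu]
    exact Finset.sum_nonneg (fun ω _ => mul_nonneg (weight_nonneg pv hpv0 hpv1 ω)
      (Phi_nonneg r π hr0 ω T))
  rw [htel, hu0] at hsum
  have hlast : 0 ≤ (1-p) * u T := mul_nonneg (by linarith) huT
  linarith

end AuxE

/-- **Theorem 2 (geometric usage durations).**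
For any instance of the online matching problem with reusable resources in
which every usage-duration distribution is geometric, `F i = Geometric (pv i)`
(encoded by the shared-Bernoulli return flags), if `p = min_i pv i` then
`Greedy(I) / OPT(I) ≥ (1 + p) / 2`, i.e. `((1 + p) / 2) * OPT(I) ≤ Greedy(I)`. -/
theorem greedy_geometric_competitive
    (N T : ℕ) (hN : 0 < N)
    (r : Fin N → ℝ) (hr0 : ∀ i, 0 ≤ r i) (hrmono : Monotone r)
    (Nbr : Fin T → Finset (Fin N))
    (pv : Fin N → ℝ) (hpv0 : ∀ i, 0 ≤ pv i) (hpv1 : ∀ i, pv i ≤ 1)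
    (p : ℝ) (hp : p = ⨅ i, pv i) :
    ((1 + p) / 2) * optVal N T Nbr r pv ≤ greedyVal N T Nbr r pv := by
  have hple : ∀ i, p ≤ pv i := by
    intro i
    rw [hp]
    exact ciInf_le (Set.finite_range pv).bddBelow i
  haveI : Nonempty (Fin N) := ⟨⟨0, hN⟩⟩
  have hp0 : 0 ≤ p := by
    rw [hp]
    exact le_ciInf (fun i => hpv0 i)
  have hp1 : p ≤ 1 := le_trans (hple ⟨0, hN⟩) (hpv1 ⟨0, hN⟩)
  have hne : (1 + p) ≠ 0 := by linarith
  have hopt : optVal N T Nbr r pv ≤ 2 * greedyVal N T Nbr r pv / (1 + p) := by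
    haveI : Nonempty (Policy N T Nbr) :=
      ⟨⟨fun _ _ _ => none, fun t I hist i hi => by cases hi⟩⟩
    refine ciSup_le (fun π => ?_)
    have hmb := main_bound r p π pv hN hr0 hrmono hp0 hp1 hpv0 hpv1 hple
    rw [le_div_iff₀ (by linarith : (0:ℝ) < 1 + p)]
    calc expect pv (reward r π) * (1 + p)
        = (1 + p) * expect pv (reward r π) := by ring
      _ ≤ 2 * greedyVal N T Nbr r pv := hmb
  calc ((1 + p) / 2) * optVal N T Nbr r pv
      ≤ ((1 + p) / 2) * (2 * greedyVal N T Nbr r pv / (1 + p)) :=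
        mul_le_mul_of_nonneg_left hopt (by linarith)
    _ = greedyVal N T Nbr r pv := by
        field_simp
end

section
/- Under the shared-Bernoulli coupling of Greedy and OPT with geometric usage durations, define F_{it} = {i ∉ I_t} ∪ {A_t = i} (resource i unavailable at the end of time t under Greedy) and F*_{it} = {i ∉ I*_t} ∪ {A*_t = i} (analogously for OPT). If the event {A*_t = i and A_t < i} occurs (i.e., OPT matches i at time t while Greedy matches a strictly lower-indexed resource or nothing), then the event F_{i,t-1} ∩ ¬F*_{i,t-1} occurs. -/
open Finset

/-- The set of resources unavailable under `π` at the end of step `n - 1`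
(equivalently, just before the returns at the start of step `n`).  For
`n = t + 1` membership `i ∈ busyEnd π ω (t+1)` is exactly the event
`F_{it} = {i ∉ I_t} ∪ {A_t = i}` of the paper: resource `i` was either
unavailable at time `t` or matched at time `t`; for `n = 0` it is the empty
(always false) event, matching the convention that all resources start
available. -/
def busyEnd {N T : ℕ} {Nbr : Fin T → Finset (Fin N)} (π : Policy N T Nbr)
    (ω : Flags N T) (n : ℕ) : Finset (Fin N) :=
  (stateUpTo π ω n).1

/-- The event `A_t < i`: the policy matched a resource of strictly smaller
index than `i`, or made no match. -/
def matchedBelow {N T : ℕ} {Nbr : Fin T → Finset (Fin N)} (π : Policy N T Nbr)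
    (ω : Flags N T) (t : Fin T) (i : Fin N) : Prop :=
  (act π ω t).elim True (fun j => j < i)

/-- **Claim (necessary condition for a lost match).**  Under the
shared-Bernoulli coupling of Greedy and any benchmark policy `π` (in
particular the optimal clairvoyant policy `OPT`) with geometric usage
durations: if on a sample path `ω` the event `{A*_t = i and A_t < i}` occurs
(OPT matches `i` at time `t` while Greedy matches a strictly lower-indexed
resource or nothing), then the event `F_{i,t-1} ∩ ¬F*_{i,t-1}` occurs, where
`F_{i,t-1}` (resp. `F*_{i,t-1}`) is the event that resource `i` is unavailable
at the end of time `t-1` under Greedy (resp. under `π`), i.e.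
`F_{it} = {i ∉ I_t} ∪ {A_t = i}`. -/
theorem lost_match_implies_busy_greedy_free_opt
    (N T : ℕ) (r : Fin N → ℝ) (hr0 : ∀ i, 0 ≤ r i) (hrmono : Monotone r)
    (Nbr : Fin T → Finset (Fin N))
    (pv : Fin N → ℝ) (hpv0 : ∀ i, 0 ≤ pv i) (hpv1 : ∀ i, pv i ≤ 1)
    (π : Policy N T Nbr) (ω : Flags N T) (t : Fin T) (i : Fin N)
    (hOPT : act π ω t = some i)
    (hG : matchedBelow (greedy N T Nbr) ω t i) :
    i ∈ busyEnd (greedy N T Nbr) ω t.val ∧ i ∉ busyEnd π ω t.val := by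
  have hfeas := π.feasible t _ _ i hOPT
  rw [Finset.mem_inter] at hfeas
  obtain ⟨hiav, hiN⟩ := hfeas
  have hGnot : i ∉ avail (greedy N T Nbr) ω t := by
    intro hin
    have hmem : i ∈ avail (greedy N T Nbr) ω t ∩ Nbr t :=
      Finset.mem_inter.2 ⟨hin, hiN⟩
    have hne : (avail (greedy N T Nbr) ω t ∩ Nbr t).Nonempty := ⟨i, hmem⟩
    have hact : act (greedy N T Nbr) ω t
        = some ((avail (greedy N T Nbr) ω t ∩ Nbr t).max' hne) := dif_pos hne
    have hle : i ≤ (avail (greedy N T Nbr) ω t ∩ Nbr t).max' hne :=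
      Finset.le_max' _ i hmem
    rw [matchedBelow, hact] at hG
    simp only [Option.elim] at hG
    exact absurd hG (not_lt.2 hle)
  simp only [avail, Finset.mem_sdiff, Finset.mem_univ, Finset.mem_filter,
    true_and, not_and, not_not, Bool.not_eq_false] at hGnot hiav
  push_neg at hGnot
  obtain ⟨hbusyG, hflag⟩ := hGnot
  refine ⟨hbusyG, fun hbusyO => ?_⟩
  exact absurd (hiav hbusyO) (by simp [hflag])
end

section
/- Let ALG be any online policy coupled with OPT on a common probability space (preserving marginal laws), and suppose E[Σ_{t=1}^T r_{A_t}] ≥ α · E[Σ_{t=1}^T r*(I_t)] for some α ∈ (0,1], where A_t is ALG's match at time t and I_t is the set of resources available under ALG at time t. Then E[Σ_{t=1}^T Σ_{i=1}^N r_i · 1(A*_t = i, ¬O_{it})] ≤ (1/α) · ALG(I), where O_{it} is the event that every resource j ≥ i is unavailable under ALG at time t; consequently OPT(I) ≤ (1/α)·ALG(I) + LOST, where LOST = E[Σ_{t=1}^T Σ_{i=1}^N r_i · 1(A*_t = i, O_{it})]. -/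
open Finset

/-- `r*(I) = max_{i ∈ I} r i`, with `r*(∅) = 0`. -/
noncomputable def rstar {N : ℕ} (r : Fin N → ℝ) (I : Finset (Fin N)) : ℝ :=
  if h : I.Nonempty then I.sup' h r else 0

/-- **Decomposition of OPT's reward against an approximately-greedy `ALG`.**

Consider an instance of the online matching problem with reusable resources,
with `N` resources, rewards `0 ≤ r 0 ≤ ... ≤ r (N-1)`, `T` requests and
neighborhoods `Nbr`.  An online policy `ALG` and the clairvoyant benchmark
`OPT` are run on a common (countable) probability space `Ω` with weights `μ`
under any coupling preserving the marginal law of each policy: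

* `Iav t ω` (resp. `IavStar t ω`) is the set of resources available to `ALG`
  (resp. to `OPT`) at time `t`;
* `A t ω` is `ALG`'s match at time `t` (an available neighboring resource,
  hypothesis `hA`), and `Astar t ω` is `OPT`'s match (hypothesis `hAstar`);
* `ALG(I) = E[Σ_t r_{A_t}]` and `OPT(I) = E[Σ_t r_{A*_t}]` (marginal laws are
  preserved);
* `ALG` is `α`-approximately greedy: `E[Σ_t r_{A_t}] ≥ α · E[Σ_t r*(I_t)]` for
  some `α ∈ (0, 1]`.

With `O_{it}` the event that every resource `j ≥ i` is unavailable under `ALG`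
at time `t` and `LOST = E[Σ_t Σ_i r i · 1(A*_t = i, O_{it})]`, we have
`E[Σ_t Σ_i r i · 1(A*_t = i, ¬O_{it})] ≤ (1/α) · ALG(I)`; consequently
`OPT(I) ≤ (1/α) · ALG(I) + LOST`. -/
theorem opt_le_inv_alpha_alg_add_lost
    (N T : ℕ) (r : Fin N → ℝ) (hr0 : ∀ i, 0 ≤ r i) (hrmono : Monotone r)
    (Nbr : Fin T → Finset (Fin N))
    (Ω : Type*) [Countable Ω] (μ : Ω → ℝ)
    (hμ0 : ∀ ω, 0 ≤ μ ω) (hμ1 : ∑' ω, μ ω = 1)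
    (Iav IavStar : Fin T → Ω → Finset (Fin N))
    (A Astar : Fin T → Ω → Option (Fin N))
    (hA : ∀ t ω i, A t ω = some i → i ∈ Iav t ω ∩ Nbr t)
    (hAstar : ∀ t ω i, Astar t ω = some i → i ∈ IavStar t ω ∩ Nbr t)
    (α : ℝ) (hα0 : 0 < α) (hα1 : α ≤ 1)
    (happrox : (∑' ω, μ ω * ∑ t : Fin T, (A t ω).elim 0 r)
        ≥ α * ∑' ω, μ ω * ∑ t : Fin T, rstar r (Iav t ω)) :
    (∑' ω, μ ω * ∑ t : Fin T, ∑ i : Fin N,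
        if Astar t ω = some i ∧ ¬ (∀ j, i ≤ j → j ∉ Iav t ω) then r i else 0)
      ≤ (1 / α) * ∑' ω, μ ω * ∑ t : Fin T, (A t ω).elim 0 r
    ∧ (∑' ω, μ ω * ∑ t : Fin T, (Astar t ω).elim 0 r)
      ≤ (1 / α) * (∑' ω, μ ω * ∑ t : Fin T, (A t ω).elim 0 r)
        + ∑' ω, μ ω * ∑ t : Fin T, ∑ i : Fin N,
            if Astar t ω = some i ∧ (∀ j, i ≤ j → j ∉ Iav t ω) then r i else 0 := by
  classical
  set S := ∑ i : Fin N, r i with hSdef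
  have hS0 : 0 ≤ S := Finset.sum_nonneg fun i _ => hr0 i
  have hrS : ∀ i, r i ≤ S := fun i =>
    Finset.single_le_sum (fun j _ => hr0 j) (Finset.mem_univ i)
  have hrstar0 : ∀ I : Finset (Fin N), 0 ≤ rstar r I := by
    intro I
    unfold rstar
    split
    · rename_i h
      obtain ⟨i, hi⟩ := h
      exact le_trans (hr0 i) (Finset.le_sup' r hi)
    · exact le_rfl
  have hrstarS : ∀ I : Finset (Fin N), rstar r I ≤ S := by
    intro I
    unfold rstar
    split
    · exact Finset.sup'_le _ _ fun i _ => hrS i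
    · exact hS0
  set fB : Ω → ℝ := fun ω => ∑ t : Fin T, ∑ i : Fin N,
      if Astar t ω = some i ∧ ¬ (∀ j, i ≤ j → j ∉ Iav t ω) then r i else 0 with hfB
  set fL : Ω → ℝ := fun ω => ∑ t : Fin T, ∑ i : Fin N,
      if Astar t ω = some i ∧ (∀ j, i ≤ j → j ∉ Iav t ω) then r i else 0 with hfL
  set fA : Ω → ℝ := fun ω => ∑ t : Fin T, (A t ω).elim 0 r with hfA
  set fO : Ω → ℝ := fun ω => ∑ t : Fin T, (Astar t ω).elim 0 r with hfO
  set fR : Ω → ℝ := fun ω => ∑ t : Fin T, rstar r (Iav t ω) with hfR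
  -- generic facts
  have hμsum : Summable μ := by
    by_contra h
    rw [tsum_eq_zero_of_not_summable h] at hμ1
    norm_num at hμ1
  have hsummable : ∀ g : Ω → ℝ, (∀ ω, 0 ≤ g ω) → (∀ ω, g ω ≤ T * S) →
      Summable (fun ω => μ ω * g ω) := by
    intro g hg0 hgC
    refine Summable.of_nonneg_of_le (fun ω => mul_nonneg (hμ0 ω) (hg0 ω))
      (fun ω => mul_le_mul_of_nonneg_left (hgC ω) (hμ0 ω)) (hμsum.mul_right (T * S))
  have hTS : ∀ (c : Ω → Fin T → ℝ), (∀ ω t, 0 ≤ c ω t) → (∀ ω t, c ω t ≤ S) →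
      (∀ ω, 0 ≤ ∑ t : Fin T, c ω t) ∧ (∀ ω, ∑ t : Fin T, c ω t ≤ T * S) := by
    intro c h0 hC
    constructor
    · intro ω; exact Finset.sum_nonneg fun t _ => h0 ω t
    · intro ω
      calc ∑ t : Fin T, c ω t ≤ ∑ _t : Fin T, S := Finset.sum_le_sum fun t _ => hC ω t
        _ = T * S := by simp [Finset.sum_const, nsmul_eq_mul]
  have hif0 : ∀ (P : Fin N → Prop) [DecidablePred P] (i : Fin N),
      (0:ℝ) ≤ if P i then r i else 0 := by
    intro P _ i; split <;> [exact hr0 i; exact le_rfl]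
  have hifr : ∀ (P : Fin N → Prop) [DecidablePred P] (i : Fin N),
      (if P i then r i else 0) ≤ r i := by
    intro P _ i; split <;> [exact le_rfl; exact hr0 i]
  have hifS : ∀ (P : Fin N → Prop) [DecidablePred P],
      (0:ℝ) ≤ ∑ i : Fin N, (if P i then r i else 0) ∧
      (∑ i : Fin N, if P i then r i else 0) ≤ S := by
    intro P _
    exact ⟨Finset.sum_nonneg fun i _ => hif0 P i,
      Finset.sum_le_sum fun i _ => hifr P i⟩
  -- bounds for each f
  obtain ⟨hfB0, hfBC⟩ := hTS (fun ω t => ∑ i : Fin N,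
      if Astar t ω = some i ∧ ¬ (∀ j, i ≤ j → j ∉ Iav t ω) then r i else 0)
    (fun ω t => (hifS _).1) (fun ω t => (hifS _).2)
  obtain ⟨hfL0, hfLC⟩ := hTS (fun ω t => ∑ i : Fin N,
      if Astar t ω = some i ∧ (∀ j, i ≤ j → j ∉ Iav t ω) then r i else 0)
    (fun ω t => (hifS _).1) (fun ω t => (hifS _).2)
  have helim0 : ∀ (o : Option (Fin N)), (0:ℝ) ≤ o.elim 0 r := by
    intro o; cases o <;> simp [hr0]
  have helimS : ∀ (o : Option (Fin N)), o.elim 0 r ≤ S := by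
    intro o; cases o <;> simp [hS0, hrS]
  obtain ⟨hfA0, hfAC⟩ := hTS (fun ω t => (A t ω).elim 0 r)
    (fun ω t => helim0 _) (fun ω t => helimS _)
  obtain ⟨hfO0, hfOC⟩ := hTS (fun ω t => (Astar t ω).elim 0 r)
    (fun ω t => helim0 _) (fun ω t => helimS _)
  obtain ⟨hfR0, hfRC⟩ := hTS (fun ω t => rstar r (Iav t ω))
    (fun ω t => hrstar0 _) (fun ω t => hrstarS _)
  have sB := hsummable fB hfB0 hfBC
  have sL := hsummable fL hfL0 hfLC
  have sA := hsummable fA hfA0 hfAC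
  have sO := hsummable fO hfO0 hfOC
  have sR := hsummable fR hfR0 hfRC
  -- pointwise bound fB ≤ fR
  have hBR : ∀ ω, fB ω ≤ fR ω := by
    intro ω
    refine Finset.sum_le_sum fun t _ => ?_
    rcases h : Astar t ω with _ | i0
    · refine le_trans (le_of_eq ?_) (hrstar0 _)
      refine Finset.sum_eq_zero fun i _ => ?_
      exact if_neg fun hc => Option.some_ne_none i hc.1.symm
    · rw [Finset.sum_eq_single i0]
      · by_cases hO : ∀ j, i0 ≤ j → j ∉ Iav t ω
        · rw [if_neg fun hc => hc.2 hO]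
          exact hrstar0 _
        · rw [if_pos ⟨rfl, hO⟩]
          push_neg at hO
          obtain ⟨j, hij, hj⟩ := hO
          have hne : (Iav t ω).Nonempty := ⟨j, hj⟩
          calc r i0 ≤ r j := hrmono hij
            _ ≤ rstar r (Iav t ω) := by
                unfold rstar
                rw [dif_pos hne]
                exact Finset.le_sup' r hj
      · intro b _ hb
        exact if_neg fun hc => hb (Option.some.inj hc.1).symm
      · simp
  -- pointwise decomposition fO = fB + fL
  have hdec : ∀ ω, fO ω = fB ω + fL ω := by
    intro ω
    rw [hfO, hfB, hfL]
    rw [← Finset.sum_add_distrib]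
    refine Finset.sum_congr rfl fun t _ => ?_
    rw [← Finset.sum_add_distrib]
    have : ∀ i : Fin N,
        ((if Astar t ω = some i ∧ ¬ (∀ j, i ≤ j → j ∉ Iav t ω) then r i else 0)
          + (if Astar t ω = some i ∧ (∀ j, i ≤ j → j ∉ Iav t ω) then r i else 0))
        = if Astar t ω = some i then r i else 0 := by
      intro i
      by_cases hP : Astar t ω = some i
      · by_cases hQ : (∀ j, i ≤ j → j ∉ Iav t ω)
        · rw [if_neg fun hc => hc.2 hQ, if_pos ⟨hP, hQ⟩, if_pos hP, zero_add]
        · rw [if_pos ⟨hP, hQ⟩, if_neg fun hc => hQ hc.2, if_pos hP, add_zero]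
      · rw [if_neg fun hc => hP hc.1, if_neg fun hc => hP hc.1, if_neg hP, add_zero]
    simp only [this]
    rcases h : Astar t ω with _ | i0
    · exact (Finset.sum_eq_zero fun i _ =>
        if_neg fun hc => Option.some_ne_none i hc.symm).symm
    · rw [Finset.sum_eq_single i0]
      · simp
      · intro b _ hb; exact if_neg fun hc => hb (Option.some.inj hc).symm
      · simp
  -- tsum comparisons
  have key1 : (∑' ω, μ ω * fB ω) ≤ (1/α) * ∑' ω, μ ω * fA ω := by
    have h1 : (∑' ω, μ ω * fB ω) ≤ ∑' ω, μ ω * fR ω :=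
      Summable.tsum_le_tsum (fun ω => mul_le_mul_of_nonneg_left (hBR ω) (hμ0 ω)) sB sR
    have h2 : (∑' ω, μ ω * fR ω) ≤ (1/α) * ∑' ω, μ ω * fA ω := by
      rw [one_div_mul_eq_div, le_div_iff₀ hα0]
      rw [mul_comm]
      exact happrox
    exact le_trans h1 h2
  refine ⟨key1, ?_⟩
  have hOsplit : (∑' ω, μ ω * fO ω) = (∑' ω, μ ω * fB ω) + ∑' ω, μ ω * fL ω := by
    calc (∑' ω, μ ω * fO ω) = ∑' ω, (μ ω * fB ω + μ ω * fL ω) := by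
          refine tsum_congr fun ω => ?_
          rw [hdec ω, mul_add]
      _ = (∑' ω, μ ω * fB ω) + ∑' ω, μ ω * fL ω := Summable.tsum_add sB sL
  rw [hOsplit]
  exact add_le_add_left key1 _
end
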